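/- Let A ∈ ℂ^{MN×N} be a weighting matrix, G ∈ ℂ^{MN×N} a deterministic mean matrix, Q ∈ ℂ^{MN×MN} Hermitian with Q − G P G^H positive definite, and P ∈ ℂ^{N×N} Hermitian PSD. Then log₂ det(I_N + P^{1/2} G^H A (A^H Q A)^{-1} A^H G P^{1/2}) (over A with A^H Q A invertible) is maximized by A = Q^{-1} G, with maximum value log₂ det(I_N + P^{1/2} G^H (Q − G P G^H)^{-1} G P^{1/2}). -/

import Mathlib

open Matrix ComplexOrder

/-- The positive semidefinite square root of a positive semidefinite matrix
(the definition of `Matrix.PosSemidef.sqrt` in older Mathlib). -/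
noncomputable def Matrix.PosSemidef.sqrt {n : Type*} {𝕜 : Type*} [Fintype n] [DecidableEq n]
    [RCLike 𝕜] {A : Matrix n n 𝕜} (hA : A.PosSemidef) : Matrix n n 𝕜 :=
  hA.1.eigenvectorUnitary.1 * diagonal ((↑) ∘ (√·) ∘ hA.1.eigenvalues) *
  (star hA.1.eigenvectorUnitary : Matrix n n 𝕜)

lemma Matrix.PosSemidef.posSemidef_sqrt {n : Type*} {𝕜 : Type*} [Fintype n] [DecidableEq n]
    [RCLike 𝕜] {A : Matrix n n 𝕜} (hA : A.PosSemidef) : hA.sqrt.PosSemidef := by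
  unfold Matrix.PosSemidef.sqrt
  rw [Matrix.star_eq_conjTranspose]
  exact (Matrix.PosSemidef.diagonal
    (fun i => RCLike.ofReal_nonneg.mpr (Real.sqrt_nonneg _))).mul_mul_conjTranspose_same _

lemma Matrix.PosSemidef.sqrt_mul_self {n : Type*} {𝕜 : Type*} [Fintype n] [DecidableEq n]
    [RCLike 𝕜] {A : Matrix n n 𝕜} (hA : A.PosSemidef) : hA.sqrt * hA.sqrt = A := by
  unfold Matrix.PosSemidef.sqrt
  have hU : (star hA.1.eigenvectorUnitary : Matrix n n 𝕜) *
      (hA.1.eigenvectorUnitary : Matrix n n 𝕜) = 1 :=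
    (Matrix.mem_unitaryGroup_iff').mp hA.1.eigenvectorUnitary.2
  have hD : diagonal (((↑) ∘ (√·) ∘ hA.1.eigenvalues) : n → 𝕜) *
      diagonal (((↑) ∘ (√·) ∘ hA.1.eigenvalues) : n → 𝕜) =
      diagonal (RCLike.ofReal ∘ hA.1.eigenvalues : n → 𝕜) := by
    rw [diagonal_mul_diagonal]
    congr 1
    funext i
    simp only [Function.comp]
    rw [← RCLike.ofReal_mul, Real.mul_self_sqrt (hA.eigenvalues_nonneg i)]
  conv_rhs => rw [hA.1.spectral_theorem, Unitary.conjStarAlgAut_apply]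
  calc (hA.1.eigenvectorUnitary : Matrix n n 𝕜) * diagonal ((↑) ∘ (√·) ∘ hA.1.eigenvalues) *
        (star hA.1.eigenvectorUnitary : Matrix n n 𝕜) *
        ((hA.1.eigenvectorUnitary : Matrix n n 𝕜) * diagonal ((↑) ∘ (√·) ∘ hA.1.eigenvalues) *
        (star hA.1.eigenvectorUnitary : Matrix n n 𝕜))
      = (hA.1.eigenvectorUnitary : Matrix n n 𝕜) *
        (diagonal (((↑) ∘ (√·) ∘ hA.1.eigenvalues) : n → 𝕜) *
        ((star hA.1.eigenvectorUnitary : Matrix n n 𝕜) * (hA.1.eigenvectorUnitary : Matrix n n 𝕜)) *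
        diagonal (((↑) ∘ (√·) ∘ hA.1.eigenvalues) : n → 𝕜)) *
        (star hA.1.eigenvectorUnitary : Matrix n n 𝕜) := by simp only [Matrix.mul_assoc]
    _ = _ := by rw [hU, Matrix.mul_one, hD]

section Aux

variable {m n : Type*} [Fintype m] [DecidableEq m] [Fintype n] [DecidableEq n]

/-- `det (1 + M)` is a real number `≥ 1` when `M` is PSD. -/
lemma aux_det_one_add_psd {M : Matrix n n ℂ} (hM : M.PosSemidef) :
    ∃ r : ℝ, 1 ≤ r ∧ (1 + M).det = (r : ℂ) := by
  have hH := hM.isHermitian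
  refine ⟨∏ i, (1 + hH.eigenvalues i), ?_, ?_⟩
  · calc (1:ℝ) = ∏ _i : n, 1 := by simp
      _ ≤ ∏ i, (1 + hH.eigenvalues i) :=
          Finset.prod_le_prod (fun i _ => by norm_num)
            (fun i _ => by have := hM.eigenvalues_nonneg i; linarith)
  · have hU : (hH.eigenvectorUnitary : Matrix n n ℂ) *
        (star hH.eigenvectorUnitary : Matrix n n ℂ) = 1 :=
      (Matrix.mem_unitaryGroup_iff).mp hH.eigenvectorUnitary.2
    have h1M : 1 + M = (hH.eigenvectorUnitary : Matrix n n ℂ) *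
        (1 + diagonal (RCLike.ofReal ∘ hH.eigenvalues)) *
        (star hH.eigenvectorUnitary : Matrix n n ℂ) := by
      conv_lhs => rw [hH.spectral_theorem, Unitary.conjStarAlgAut_apply]
      rw [Matrix.mul_add, Matrix.mul_one, Matrix.add_mul, hU]
    have hdetU : ((hH.eigenvectorUnitary : Matrix n n ℂ).det) *
        ((star hH.eigenvectorUnitary : Matrix n n ℂ).det) = 1 := by
      rw [← det_mul, hU, det_one]
    have hd : ((1 : Matrix n n ℂ) + diagonal (RCLike.ofReal ∘ hH.eigenvalues)).det =
        ((∏ i, (1 + hH.eigenvalues i) : ℝ) : ℂ) := by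
      rw [← diagonal_one, diagonal_add, det_diagonal]
      push_cast
      simp [Function.comp]
    rw [h1M, det_mul, det_mul, hd, mul_right_comm, hdetU, one_mul]

/-- Monotonicity of `det (1 + ·)` with respect to the Loewner order on PSD matrices. -/
lemma aux_det_mono {X Y : Matrix n n ℂ} (hX : X.PosSemidef) (hYX : (Y - X).PosSemidef) :
    (1 + X).det.re ≤ (1 + Y).det.re := by
  have hB : (1 + X).PosDef := Matrix.PosDef.one.add_posSemidef hX
  set R := hB.posSemidef.sqrt with hRdef
  have hRH : R.IsHermitian := hB.posSemidef.posSemidef_sqrt.isHermitian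
  have hRR : R * R = 1 + X := hB.posSemidef.sqrt_mul_self
  have hdetB : (0 : ℂ) < (1 + X).det := hB.det_pos
  have hdetBre : 0 < (1 + X).det.re ∧ (1 + X).det.im = 0 := by
    have h := Complex.lt_def.mp hdetB
    exact ⟨by simpa using h.1, by simpa using h.2.symm⟩
  have hRu : IsUnit R.det := by
    have h2 : R.det * R.det = (1 + X).det := by rw [← det_mul, hRR]
    have : R.det ≠ 0 := by
      intro h
      rw [h, mul_zero] at h2
      exact hdetB.ne' h2.symm
    exact this.isUnit
  have hRinv : R⁻¹ᴴ = R⁻¹ := by rw [conjTranspose_nonsing_inv, hRH.eq]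
  have hmid : (R⁻¹ * (Y - X) * R⁻¹).PosSemidef := by
    have := hYX.mul_mul_conjTranspose_same R⁻¹
    rwa [hRinv] at this
  obtain ⟨r, hr1, hrdet⟩ := aux_det_one_add_psd hmid
  have key : 1 + Y = R * (1 + R⁻¹ * (Y - X) * R⁻¹) * R := by
    have hc : R * (R⁻¹ * (Y - X) * R⁻¹) * R = Y - X := by
      rw [← Matrix.mul_assoc, ← Matrix.mul_assoc, Matrix.mul_nonsing_inv _ hRu,
        Matrix.one_mul, Matrix.mul_assoc, Matrix.nonsing_inv_mul _ hRu, Matrix.mul_one]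
    rw [Matrix.mul_add, Matrix.mul_one, Matrix.add_mul, hRR, hc]
    abel
  have hdetY : (1 + Y).det = (1 + X).det * (r : ℂ) := by
    rw [key, det_mul, det_mul, hrdet]
    rw [show R.det * (r : ℂ) * R.det = R.det * R.det * (r : ℂ) by ring, ← det_mul, hRR]
  rw [hdetY]
  rw [Complex.mul_re]
  simp only [Complex.ofReal_re, Complex.ofReal_im, mul_zero, sub_zero]
  nlinarith [hdetBre.1, hdetBre.2]

/-- `1 - B (BᴴB)⁻¹ Bᴴ` is PSD when `BᴴB` is invertible. -/
lemma aux_proj_psd {B : Matrix m n ℂ} (h : IsUnit (Bᴴ * B)) :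
    (1 - B * (Bᴴ * B)⁻¹ * Bᴴ).PosSemidef := by
  have hdet : IsUnit (Bᴴ * B).det := (isUnit_iff_isUnit_det _).mp h
  set Pr := B * (Bᴴ * B)⁻¹ * Bᴴ with hPrdef
  have hKH : (Bᴴ * B)ᴴ = Bᴴ * B := by
    rw [conjTranspose_mul, conjTranspose_conjTranspose]
  have hPrH : Prᴴ = Pr := by
    rw [hPrdef, conjTranspose_mul, conjTranspose_mul, conjTranspose_conjTranspose,
      conjTranspose_nonsing_inv, hKH, Matrix.mul_assoc]
  have hPr2 : Pr * Pr = Pr := by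
    rw [hPrdef]
    calc B * (Bᴴ * B)⁻¹ * Bᴴ * (B * (Bᴴ * B)⁻¹ * Bᴴ)
        = B * ((Bᴴ * B)⁻¹ * ((Bᴴ * B) * ((Bᴴ * B)⁻¹ * Bᴴ))) := by
          simp only [Matrix.mul_assoc]
      _ = B * (Bᴴ * B)⁻¹ * Bᴴ := by
          rw [Matrix.mul_nonsing_inv_cancel_left _ _ hdet, ← Matrix.mul_assoc]
  have h1 : (1 - Pr)ᴴ * (1 - Pr) = 1 - Pr := by
    have hsub : (1 - Pr)ᴴ = 1 - Pr := by rw [conjTranspose_sub, conjTranspose_one, hPrH]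
    rw [hsub, Matrix.sub_mul, Matrix.mul_sub, Matrix.mul_sub]
    simp only [Matrix.one_mul, Matrix.mul_one, hPr2]
    abel
  rw [← h1]
  exact posSemidef_conjTranspose_mul_self _

lemma aux_injective {Q : Matrix m m ℂ} {A : Matrix m n ℂ} (h : IsUnit (Aᴴ * Q * A)) :
    ∀ x, A *ᵥ x = 0 → x = 0 := by
  intro x hx
  have hdet : IsUnit (Aᴴ * Q * A).det := (isUnit_iff_isUnit_det _).mp h
  have h1 : (Aᴴ * Q * A)⁻¹ * (Aᴴ * Q * A) = 1 := Matrix.nonsing_inv_mul _ hdet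
  calc x = 1 *ᵥ x := (one_mulVec x).symm
    _ = ((Aᴴ * Q * A)⁻¹ * (Aᴴ * Q * A)) *ᵥ x := by rw [h1]
    _ = (Aᴴ * Q * A)⁻¹ *ᵥ ((Aᴴ * Q) *ᵥ (A *ᵥ x)) := by
        simp only [mulVec_mulVec, Matrix.mul_assoc]
    _ = 0 := by rw [hx, mulVec_zero, mulVec_zero]

lemma aux_posdef_conj {C : Matrix m m ℂ} (hC : C.PosDef) {A : Matrix m n ℂ}
    (hA : ∀ x, A *ᵥ x = 0 → x = 0) : (Aᴴ * C * A).PosDef := by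
  refine hC.conjTranspose_mul_mul_same (fun x y hxy => sub_eq_zero.mp (hA _ ?_))
  rw [mulVec_sub, hxy, sub_self]

end Aux

set_option maxHeartbeats 2000000 in
/-- Optimal LSFD weighting (deterministic form of Theorem 2): with `D = Aᴴ G P^{1/2}`
and `Σ = Aᴴ Q A − D Dᴴ`, the SE `log₂ det(I + Dᴴ Σ⁻¹ D)` is maximized over `A` with
`Aᴴ Q A` invertible by `A = Q⁻¹ G`, with maximum value
`log₂ det(I + P^{1/2} Gᴴ (Q − G P Gᴴ)⁻¹ G P^{1/2})`. -/
theorem stmt15 (M N : ℕ) (G : Matrix (Fin M × Fin N) (Fin N) ℂ)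
    (Q : Matrix (Fin M × Fin N) (Fin M × Fin N) ℂ) (hQ : Q.IsHermitian)
    (P : Matrix (Fin N) (Fin N) ℂ) (hP : P.PosSemidef)
    (hdiff : (Q - G * P * Gᴴ).PosDef)
    (hGQG : IsUnit (Gᴴ * Q⁻¹ * G)) :
    (∀ A : Matrix (Fin M × Fin N) (Fin N) ℂ, IsUnit (Aᴴ * Q * A) →
      Real.logb 2
        ((1 + (Aᴴ * G * hP.sqrt)ᴴ *
            (Aᴴ * Q * A - (Aᴴ * G * hP.sqrt) * (Aᴴ * G * hP.sqrt)ᴴ)⁻¹ *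
            (Aᴴ * G * hP.sqrt)).det.re) ≤
      Real.logb 2 ((1 + hP.sqrt * Gᴴ * (Q - G * P * Gᴴ)⁻¹ * G * hP.sqrt).det.re)) ∧
    Real.logb 2
      ((1 + ((Q⁻¹ * G)ᴴ * G * hP.sqrt)ᴴ *
          ((Q⁻¹ * G)ᴴ * Q * (Q⁻¹ * G) -
            ((Q⁻¹ * G)ᴴ * G * hP.sqrt) * ((Q⁻¹ * G)ᴴ * G * hP.sqrt)ᴴ)⁻¹ *
          ((Q⁻¹ * G)ᴴ * G * hP.sqrt)).det.re) =
    Real.logb 2 ((1 + hP.sqrt * Gᴴ * (Q - G * P * Gᴴ)⁻¹ * G * hP.sqrt).det.re) := by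
  set S := hP.sqrt with hSdef
  have hSH : Sᴴ = S := hP.posSemidef_sqrt.isHermitian.eq
  have hSS : S * S = P := hP.sqrt_mul_self
  set C := Q - G * P * Gᴴ with hCdef
  have hCu : IsUnit C.det := (isUnit_iff_isUnit_det _).mp hdiff.isUnit
  -- the Σ-rewrite, valid for any A
  have sigma_eq : ∀ A : Matrix (Fin M × Fin N) (Fin N) ℂ,
      Aᴴ * Q * A - (Aᴴ * G * S) * (Aᴴ * G * S)ᴴ = Aᴴ * C * A := by
    intro A
    have h1 : (Aᴴ * G * S)ᴴ = S * (Gᴴ * A) := by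
      rw [conjTranspose_mul, conjTranspose_mul, conjTranspose_conjTranspose, hSH]
    rw [h1, hCdef]
    calc Aᴴ * Q * A - Aᴴ * G * S * (S * (Gᴴ * A))
        = Aᴴ * Q * A - Aᴴ * G * (S * S) * (Gᴴ * A) := by
          simp only [Matrix.mul_assoc]
      _ = Aᴴ * (Q - G * P * Gᴴ) * A := by
          rw [hSS, Matrix.mul_sub, Matrix.sub_mul]
          simp only [Matrix.mul_assoc]
  -- Q is positive definite
  have hQpd : Q.PosDef := by
    have := hdiff.add_posSemidef (hP.mul_mul_conjTranspose_same G)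
    rwa [sub_add_cancel] at this
  constructor
  · -- part 1: the upper bound
    intro A hA
    have hinj := aux_injective hA
    have hK : (Aᴴ * C * A).PosDef := aux_posdef_conj hdiff hinj
    set K := Aᴴ * C * A with hKdef
    have hKu : IsUnit K.det := (isUnit_iff_isUnit_det _).mp hK.isUnit
    -- square root of C
    set R := hdiff.posSemidef.sqrt with hRdef
    have hRH : R.IsHermitian := hdiff.posSemidef.posSemidef_sqrt.isHermitian
    have hRR : R * R = C := hdiff.posSemidef.sqrt_mul_self
    have hRu : IsUnit R.det := by
      have h2 : R.det * R.det = C.det := by rw [← det_mul, hRR]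
      have : R.det ≠ 0 := by
        intro h
        rw [h, mul_zero] at h2
        exact (hCu.ne_zero) h2.symm
      exact this.isUnit
    have hRinvH : R⁻¹ᴴ = R⁻¹ := by rw [conjTranspose_nonsing_inv, hRH.eq]
    -- the projection
    have hBB : (R * A)ᴴ * (R * A) = K := by
      rw [conjTranspose_mul, hRH.eq, hKdef, ← hRR]
      simp only [Matrix.mul_assoc]
    have hproj : (1 - (R * A) * K⁻¹ * (R * A)ᴴ).PosSemidef := by
      have := aux_proj_psd (B := R * A) (by rw [hBB]; exact hK.isUnit)
      rwa [hBB] at this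
    -- the middle matrix C⁻¹ - A K⁻¹ Aᴴ is PSD
    have hmid : (C⁻¹ - A * K⁻¹ * Aᴴ).PosSemidef := by
      have hpsd := hproj.mul_mul_conjTranspose_same R⁻¹
      rw [hRinvH] at hpsd
      have heq : R⁻¹ * (1 - (R * A) * K⁻¹ * (R * A)ᴴ) * R⁻¹ = C⁻¹ - A * K⁻¹ * Aᴴ := by
        rw [Matrix.mul_sub, Matrix.sub_mul, Matrix.mul_one]
        congr 1
        · rw [← hRR, Matrix.mul_inv_rev]
        · rw [conjTranspose_mul, hRH.eq]
          calc R⁻¹ * ((R * A) * K⁻¹ * (Aᴴ * R)) * R⁻¹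
              = (R⁻¹ * R) * (A * K⁻¹ * Aᴴ) * (R * R⁻¹) := by
                simp only [Matrix.mul_assoc]
            _ = A * K⁻¹ * Aᴴ := by
                rw [Matrix.nonsing_inv_mul _ hRu, Matrix.mul_nonsing_inv _ hRu,
                  Matrix.one_mul, Matrix.mul_one]
      rwa [heq] at hpsd
    -- X and Y
    set W := Aᴴ * G * S with hWdef
    have hXpsd : (Wᴴ * K⁻¹ * W).PosSemidef :=
      (hK.inv).posSemidef.conjTranspose_mul_mul_same W
    have hYX : (S * Gᴴ * C⁻¹ * G * S - Wᴴ * K⁻¹ * W).PosSemidef := by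
      have hpsd := hmid.conjTranspose_mul_mul_same (G * S)
      have heq : (G * S)ᴴ * (C⁻¹ - A * K⁻¹ * Aᴴ) * (G * S) =
          S * Gᴴ * C⁻¹ * G * S - Wᴴ * K⁻¹ * W := by
        have hGS : (G * S)ᴴ = S * Gᴴ := by rw [conjTranspose_mul, hSH]
        have hW : Wᴴ = S * (Gᴴ * A) := by
          rw [hWdef, conjTranspose_mul, conjTranspose_mul, conjTranspose_conjTranspose,
            hSH]
        rw [hGS, Matrix.mul_sub, Matrix.sub_mul, hW, hWdef]
        simp only [Matrix.mul_assoc]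
      rwa [heq] at hpsd
    -- positivity of the determinants
    have hXpd : (1 + Wᴴ * K⁻¹ * W).PosDef := Matrix.PosDef.one.add_posSemidef hXpsd
    have hXdet : 0 < (1 + Wᴴ * K⁻¹ * W).det.re := by
      have := Complex.lt_def.mp hXpd.det_pos
      simpa using this.1
    rw [sigma_eq A]
    exact Real.logb_le_logb_of_le one_lt_two hXdet (aux_det_mono hXpsd hYX)
  · -- part 2: the optimum is attained at A = Q⁻¹ G
    have hQu : IsUnit Q.det := (isUnit_iff_isUnit_det _).mp hQpd.isUnit
    set A₀ := Q⁻¹ * G with hA₀def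
    have hA₀H : A₀ᴴ = Gᴴ * Q⁻¹ := by
      rw [hA₀def, conjTranspose_mul, conjTranspose_nonsing_inv, hQ.eq]
    set T := Gᴴ * Q⁻¹ * G with hTdef
    have hTu : IsUnit T := hGQG
    have hTdetu : IsUnit T.det := (isUnit_iff_isUnit_det _).mp hTu
    have hAQA : A₀ᴴ * Q * A₀ = T := by
      rw [hA₀H, hA₀def, hTdef]
      calc Gᴴ * Q⁻¹ * Q * (Q⁻¹ * G) = Gᴴ * (Q⁻¹ * (Q * Q⁻¹)) * G := by
            simp only [Matrix.mul_assoc]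
        _ = Gᴴ * Q⁻¹ * G := by
            rw [Matrix.mul_nonsing_inv _ hQu, Matrix.mul_one, Matrix.mul_assoc]
    have hAG : A₀ᴴ * G * S = T * S := by rw [hA₀H, hTdef]
    -- Σ₀ = A₀ᴴ C A₀, and also Σ₀ = T (1 - P T)
    have hsig := sigma_eq A₀
    rw [hAQA, hAG] at hsig
    have hTH : Tᴴ = T := by
      rw [hTdef, conjTranspose_mul, conjTranspose_mul, conjTranspose_conjTranspose,
        conjTranspose_nonsing_inv, hQ.eq, Matrix.mul_assoc]
    have hTS : (T * S)ᴴ = S * T := by rw [conjTranspose_mul, hSH, hTH]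
    have hsig2 : T * S * (T * S)ᴴ = T * P * T := by
      rw [hTS]
      calc T * S * (S * T) = T * (S * S) * T := by simp only [Matrix.mul_assoc]
        _ = T * P * T := by rw [hSS]
    -- Σ₀ as T * (1 - P * T)
    have hfact : T - T * P * T = T * (1 - P * T) := by
      rw [Matrix.mul_sub, Matrix.mul_one]
      simp only [Matrix.mul_assoc]
    -- A₀ is injective, hence Σ₀ = A₀ᴴ C A₀ is positive definite
    have hinj : ∀ x, A₀ *ᵥ x = 0 → x = 0 := by
      have : IsUnit (A₀ᴴ * Q * A₀) := by rw [hAQA]; exact hTu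
      exact aux_injective this
    have hSigPd : (A₀ᴴ * C * A₀).PosDef := aux_posdef_conj hdiff hinj
    have hSigU : IsUnit (T - T * P * T) := by
      rw [← hsig2, hsig]
      exact hSigPd.isUnit
    have hTinvU : IsUnit T⁻¹ :=
      (isUnit_iff_isUnit_det _).mpr (T.isUnit_nonsing_inv_det hTdetu)
    have h1PT : IsUnit (1 - P * T) := by
      have heq : 1 - P * T = T⁻¹ * (T - T * P * T) := by
        rw [hfact, Matrix.nonsing_inv_mul_cancel_left _ _ hTdetu]
      rw [heq]
      exact hTinvU.mul hSigU
    have h1PTdet : IsUnit (1 - P * T).det := (isUnit_iff_isUnit_det _).mp h1PT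
    -- key identity: Gᴴ C⁻¹ G (1 - P T) = T
    have hCQG : C * (Q⁻¹ * G) = G * (1 - P * T) := by
      have h1 : Q * (Q⁻¹ * G) = G := Matrix.mul_nonsing_inv_cancel_left _ _ hQu
      rw [hCdef, Matrix.sub_mul, h1, Matrix.mul_sub, Matrix.mul_one, hTdef]
      simp only [Matrix.mul_assoc]
    have hkey : Gᴴ * C⁻¹ * G * (1 - P * T) = T := by
      have h2 : C⁻¹ * (C * (Q⁻¹ * G)) = Q⁻¹ * G :=
        Matrix.nonsing_inv_mul_cancel_left _ _ hCu
      calc Gᴴ * C⁻¹ * G * (1 - P * T)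
          = Gᴴ * (C⁻¹ * (G * (1 - P * T))) := by simp only [Matrix.mul_assoc]
        _ = Gᴴ * (C⁻¹ * (C * (Q⁻¹ * G))) := by rw [hCQG]
        _ = Gᴴ * (Q⁻¹ * G) := by rw [h2]
        _ = T := by rw [hTdef, Matrix.mul_assoc]
    have hGCG : Gᴴ * C⁻¹ * G = T * (1 - P * T)⁻¹ := by
      have h3 : Gᴴ * C⁻¹ * G * (1 - P * T) * (1 - P * T)⁻¹ = T * (1 - P * T)⁻¹ := by
        rw [hkey]
      rwa [Matrix.mul_nonsing_inv_cancel_right _ _ h1PTdet] at h3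
    -- compute T Σ₀⁻¹ T = Gᴴ C⁻¹ G
    have hTsT : T * (T - T * P * T)⁻¹ * T = Gᴴ * C⁻¹ * G := by
      rw [hfact, Matrix.mul_inv_rev, hGCG]
      calc T * ((1 - P * T)⁻¹ * T⁻¹) * T
          = T * (1 - P * T)⁻¹ * (T⁻¹ * T) := by simp only [Matrix.mul_assoc]
        _ = T * (1 - P * T)⁻¹ := by
            rw [Matrix.nonsing_inv_mul _ hTdetu, Matrix.mul_one]
    -- conclude: the two matrices inside the determinants are equal
    have hmats : (1 : Matrix (Fin N) (Fin N) ℂ) +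
        (A₀ᴴ * G * S)ᴴ * (A₀ᴴ * Q * A₀ - (A₀ᴴ * G * S) * (A₀ᴴ * G * S)ᴴ)⁻¹ *
          (A₀ᴴ * G * S) =
        1 + S * Gᴴ * C⁻¹ * G * S := by
      rw [hAG, hAQA, hTS]
      have h4 : T * S * (S * T) = T * P * T := by
        calc T * S * (S * T) = T * (S * S) * T := by simp only [Matrix.mul_assoc]
          _ = T * P * T := by rw [hSS]
      rw [h4]
      congr 1
      calc S * T * (T - T * P * T)⁻¹ * (T * S)
          = S * (T * (T - T * P * T)⁻¹ * T) * S := by simp only [Matrix.mul_assoc]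
        _ = S * (Gᴴ * C⁻¹ * G) * S := by rw [hTsT]
        _ = S * Gᴴ * C⁻¹ * G * S := by simp only [Matrix.mul_assoc]
    rw [hmats]
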